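/- Let C be a nonempty (n,d,w) constant-weight code with d even and d < 2w ≤ n, with distance distribution {A_{2i}}, and let H = {d/2, …, w}. Suppose H1 ⊆ H with |H1| ≥ 2 is such that m_{i,j} < d for all i ≠ j in H1, and for each i ∈ H1 let P_i be an integer with P_i ≥ T(i,w,i,n−w,d). Then Σ_{i ∈ H1} A_{2i}/P_i ≤ 1. -/

import Mathlib

/-- The number of ones of a binary vector. -/
def wtOnes {n : ℕ} (u : Fin n → ZMod 2) : ℕ :=
  (Finset.univ.filter (fun t => u t = 1)).card

/-- `C` is an `(n,d,w)` constant-weight binary code. -/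
def IsCWCode (n d w : ℕ) (C : Finset (Fin n → ZMod 2)) : Prop :=
  (∀ c ∈ C, wtOnes c = w) ∧
  ∀ u ∈ C, ∀ v ∈ C, u ≠ v → d ≤ hammingDist u v

/-- `A n d w`: the largest possible size of an `(n,d,w)` constant-weight code. -/
noncomputable def A (n d w : ℕ) : ℕ :=
  sSup {M | ∃ C : Finset (Fin n → ZMod 2), IsCWCode n d w C ∧ C.card = M}

/-- `C` is a `(w1,n1,w2,n2,d)` doubly-constant-weight binary code. -/
def IsDCWCode (w1 n1 w2 n2 d : ℕ) (C : Finset (Fin n1 ⊕ Fin n2 → ZMod 2)) : Prop :=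
  (∀ c ∈ C,
    (Finset.univ.filter (fun t : Fin n1 => c (Sum.inl t) = 1)).card = w1 ∧
    (Finset.univ.filter (fun t : Fin n2 => c (Sum.inr t) = 1)).card = w2) ∧
  ∀ u ∈ C, ∀ v ∈ C, u ≠ v → d ≤ hammingDist u v

/-- `T w1 n1 w2 n2 d`: the largest possible size of a `(w1,n1,w2,n2,d)`
doubly-constant-weight code. -/
noncomputable def T (w1 n1 w2 n2 d : ℕ) : ℕ :=
  sSup {M | ∃ C : Finset (Fin n1 ⊕ Fin n2 → ZMod 2), IsDCWCode w1 n1 w2 n2 d C ∧ C.card = M}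

/-- `S_i(c)`: the set of codewords of `C` at distance `i` from `c`. -/
def Sdist {n : ℕ} (C : Finset (Fin n → ZMod 2)) (c : Fin n → ZMod 2) (i : ℕ) :
    Finset (Fin n → ZMod 2) :=
  C.filter (fun u => hammingDist u c = i)

/-- The distance distribution `A_i = (1/|C|) ∑_{c ∈ C} |S_i(c)|` of a code `C`. -/
noncomputable def distDistr {n : ℕ} (C : Finset (Fin n → ZMod 2)) (i : ℕ) : ℚ :=
  (∑ c ∈ C, ((Sdist C c i).card : ℚ)) / (C.card : ℚ)

/-- `V_i`: vectors of `F^n` with exactly `i` ones on the first `w` coordinates and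
exactly `i` ones on the last `n - w` coordinates. -/
def Vset (n w i : ℕ) : Finset (Fin n → ZMod 2) :=
  Finset.univ.filter (fun u =>
    (Finset.univ.filter (fun t : Fin n => t.val < w ∧ u t = 1)).card = i ∧
    (Finset.univ.filter (fun t : Fin n => w ≤ t.val ∧ u t = 1)).card = i)

/-- `m_{i,j} = max { d(u,v) : u ∈ V_i, v ∈ V_j }`. -/
def mMax (n w i j : ℕ) : ℕ :=
  ((Vset n w i) ×ˢ (Vset n w j)).sup fun p => hammingDist p.1 p.2

/-- `P⁻_k(n;x) = ∑_{j odd} C(x,j) C(n-x,k-j)`. -/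
def Pminus (k n x : ℕ) : ℕ :=
  ∑ j ∈ Finset.range (k + 1), if Odd j then x.choose j * (n - x).choose (k - j) else 0

/-- `P⁺_k(n;x) = ∑_{j even} C(x,j) C(n-x,k-j)`. -/
def Pplus (k n x : ℕ) : ℕ :=
  ∑ j ∈ Finset.range (k + 1), if Even j then x.choose j * (n - x).choose (k - j) else 0

/-- The Krawtchouk polynomial `P_k(n;x) = ∑_j (-1)^j C(x,j) C(n-x,k-j)` at integer points. -/
def Kraw (k n x : ℕ) : ℤ :=
  ∑ j ∈ Finset.range (k + 1), (-1 : ℤ) ^ j * x.choose j * (n - x).choose (k - j)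


section Helpers

open Finset

private lemma zmod2_add_eq_one : ∀ x y : ZMod 2, x + y = 1 ↔ x ≠ y := by decide

private lemma card_filter_val_lt (n w : ℕ) (h : w ≤ n) :
    (Finset.univ.filter (fun t : Fin n => (t : ℕ) < w)).card = w := by
  rw [← Fintype.card_fin w, ← Finset.card_univ]
  apply Finset.card_bij (fun (t : Fin n) ht => (⟨(t : ℕ), by simpa using ht⟩ : Fin w))
  · intros; exact Finset.mem_univ _
  · intro a _ b _ hab
    exact Fin.ext (by simpa using congrArg Fin.val hab)
  · intro b _
    exact ⟨⟨(b : ℕ), lt_of_lt_of_le b.2 h⟩, by simp, rfl⟩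

private lemma hd_comp_equiv {α β : Type*} [Fintype α] [Fintype β] [DecidableEq α] [DecidableEq β]
    (e : α ≃ β) (u v : β → ZMod 2) :
    hammingDist (u ∘ e) (v ∘ e) = hammingDist u v := by
  simp only [hammingDist, Function.comp_apply]
  apply Finset.card_bij (fun t _ => e t)
  · intro a ha; simpa using (Finset.mem_filter.mp ha).2
  · intro a _ b _ hab; exact e.injective hab
  · intro b hb
    exact ⟨e.symm b, by simpa using (Finset.mem_filter.mp hb).2, by simp⟩

private lemma hd_add_right {n : ℕ} (u v c : Fin n → ZMod 2) :
    hammingDist (u + c) (v + c) = hammingDist u v := by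
  simp only [hammingDist]
  congr 1
  ext t
  simp [Pi.add_apply]

private lemma counts_lemma {n w i : ℕ} {u c : Fin n → ZMod 2} (hu : wtOnes u = w)
    (hc : wtOnes c = w) (hdist : hammingDist u c = 2 * i) :
    (Finset.univ.filter (fun t => c t = 1 ∧ u t ≠ c t)).card = i ∧
    (Finset.univ.filter (fun t => ¬ c t = 1 ∧ u t ≠ c t)).card = i := by
  classical
  set X := Finset.univ.filter (fun t => u t = 1) with hX
  set Y := Finset.univ.filter (fun t => c t = 1) with hY
  have z1 : ∀ x y : ZMod 2, (y = 1 ∧ x ≠ y) ↔ (y = 1 ∧ ¬ x = 1) := by decide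
  have z2 : ∀ x y : ZMod 2, (¬ y = 1 ∧ x ≠ y) ↔ (x = 1 ∧ ¬ y = 1) := by decide
  have z3 : ∀ x y : ZMod 2, (x ≠ y) ↔ ((y = 1 ∧ ¬ x = 1) ∨ (x = 1 ∧ ¬ y = 1)) := by decide
  have e1 : Finset.univ.filter (fun t => c t = 1 ∧ u t ≠ c t) = Y \ X := by
    ext t
    simp only [hX, hY, Finset.mem_filter, Finset.mem_univ, true_and, Finset.mem_sdiff]
    exact z1 (u t) (c t)
  have e2 : Finset.univ.filter (fun t => ¬ c t = 1 ∧ u t ≠ c t) = X \ Y := by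
    ext t
    simp only [hX, hY, Finset.mem_filter, Finset.mem_univ, true_and, Finset.mem_sdiff]
    exact z2 (u t) (c t)
  have e3 : (Finset.univ.filter (fun t => u t ≠ c t)) = (Y \ X) ∪ (X \ Y) := by
    ext t
    simp only [hX, hY, Finset.mem_filter, Finset.mem_univ, true_and, Finset.mem_union,
      Finset.mem_sdiff]
    exact z3 (u t) (c t)
  have hdisj : Disjoint (Y \ X) (X \ Y) := disjoint_sdiff_sdiff
  have hsum : (Y \ X).card + (X \ Y).card = 2 * i := by
    rw [← Finset.card_union_of_disjoint hdisj, ← e3]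
    simpa [hammingDist] using hdist
  have c1 : (Y \ X).card + (Y ∩ X).card = w := by
    rw [Finset.card_sdiff_add_card_inter]; exact hc
  have c2 : (X \ Y).card + (Y ∩ X).card = w := by
    rw [Finset.inter_comm, Finset.card_sdiff_add_card_inter]; exact hu
  rw [e1, e2]
  omega

end Helpers

section Helpers2

open Finset

private lemma exists_perm {n w : ℕ} (c : Fin n → ZMod 2) (hc : wtOnes c = w) (hw : w ≤ n) :
    ∃ e : Equiv.Perm (Fin n), ∀ t : Fin n, ((t : ℕ) < w ↔ c (e t) = 1) := by
  classical
  set q : Fin n → Prop := fun t => (t : ℕ) < w with hq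
  set p : Fin n → Prop := fun t => c t = 1 with hp
  have hcard1 : Fintype.card {x // q x} = Fintype.card {x // p x} := by
    rw [Fintype.card_subtype, Fintype.card_subtype]
    rw [card_filter_val_lt n w hw]
    exact (hc).symm
  have hcard2 : Fintype.card {x // ¬ q x} = Fintype.card {x // ¬ p x} := by
    rw [Fintype.card_subtype_compl, Fintype.card_subtype_compl, hcard1]
  set e₁ := Fintype.equivOfCardEq hcard1
  set e₂ := Fintype.equivOfCardEq hcard2
  refine ⟨(Equiv.sumCompl q).symm.trans ((e₁.sumCongr e₂).trans (Equiv.sumCompl p)), fun t => ?_⟩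
  by_cases ht : q t
  · simp only [Equiv.trans_apply, Equiv.sumCompl_symm_apply_of_pos ht,
      Equiv.sumCongr_apply, Sum.map_inl, Equiv.sumCompl_apply_inl]
    exact ⟨fun _ => (e₁ ⟨t, ht⟩).2, fun _ => ht⟩
  · simp only [Equiv.trans_apply, Equiv.sumCompl_symm_apply_of_neg ht,
      Equiv.sumCongr_apply, Sum.map_inr, Equiv.sumCompl_apply_inr]
    exact ⟨fun h => absurd h ht, fun h => absurd h (e₂ ⟨t, ht⟩).2⟩

private lemma T_bddAbove (w1 n1 w2 n2 d : ℕ) :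
    BddAbove {M | ∃ C : Finset (Fin n1 ⊕ Fin n2 → ZMod 2), IsDCWCode w1 n1 w2 n2 d C ∧ C.card = M} := by
  refine ⟨Fintype.card (Fin n1 ⊕ Fin n2 → ZMod 2), ?_⟩
  rintro M ⟨D, -, rfl⟩
  exact Finset.card_le_univ D

private lemma card_le_T {w1 n1 w2 n2 d : ℕ} (D : Finset (Fin n1 ⊕ Fin n2 → ZMod 2))
    (hD : IsDCWCode w1 n1 w2 n2 d D) : D.card ≤ T w1 n1 w2 n2 d :=
  le_csSup (T_bddAbove w1 n1 w2 n2 d) ⟨D, hD, rfl⟩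

private lemma one_le_T {i w m d : ℕ} (hiw : i ≤ w) (him : i ≤ m) : 1 ≤ T i w i m d := by
  classical
  set x0 : Fin w ⊕ Fin m → ZMod 2 := fun s =>
    Sum.elim (fun a : Fin w => if (a : ℕ) < i then 1 else 0)
      (fun b : Fin m => if (b : ℕ) < i then 1 else 0) s with hx0
  have hone : ∀ k j : ℕ, ((if k < j then (1 : ZMod 2) else 0) = 1) ↔ k < j := by
    intro k j
    by_cases h : k < j <;> simp [h]
  have hcount : ∀ (N : ℕ) (hiN : i ≤ N),
      (Finset.univ.filter (fun t : Fin N => (if (t : ℕ) < i then (1 : ZMod 2) else 0) = 1)).card = i := by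
    intro N hiN
    rw [show (Finset.univ.filter (fun t : Fin N => (if (t : ℕ) < i then (1 : ZMod 2) else 0) = 1))
        = Finset.univ.filter (fun t : Fin N => (t : ℕ) < i) from by
      ext t; simp [hone]]
    exact card_filter_val_lt N i hiN
  have hDCW : IsDCWCode i w i m d {x0} := by
    constructor
    · intro x hx
      rw [Finset.mem_singleton] at hx
      subst hx
      exact ⟨hcount w hiw, hcount m him⟩
    · intro u hu v hv huv
      rw [Finset.mem_singleton] at hu hv
      exact absurd (hu.trans hv.symm) huv
  have := card_le_T _ hDCW
  simpa using this

end Helpers2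

section Helpers3

open Finset

private def psiEq (n w : ℕ) (h : w + (n - w) = n) : (Fin w ⊕ Fin (n - w)) ≃ Fin n :=
  finSumFinEquiv.trans (finCongr h)

private lemma psi_inl_val (n w : ℕ) (h : w + (n - w) = n) (a : Fin w) :
    ((psiEq n w h) (Sum.inl a) : ℕ) = (a : ℕ) := by
  simp [psiEq, finSumFinEquiv]

private lemma psi_inr_val (n w : ℕ) (h : w + (n - w) = n) (b : Fin (n - w)) :
    ((psiEq n w h) (Sum.inr b) : ℕ) = w + (b : ℕ) := by
  simp [psiEq, finSumFinEquiv]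

private lemma card_inl (n w : ℕ) (h : w + (n - w) = n) (x : Fin n → ZMod 2) :
    (Finset.univ.filter (fun a : Fin w => x ((psiEq n w h) (Sum.inl a)) = 1)).card
      = (Finset.univ.filter (fun t : Fin n => (t : ℕ) < w ∧ x t = 1)).card := by
  apply Finset.card_bij (fun a _ => (psiEq n w h) (Sum.inl a))
  · intro a ha
    simp only [Finset.mem_filter, Finset.mem_univ, true_and] at ha ⊢
    exact ⟨by rw [psi_inl_val]; exact a.2, ha⟩
  · intro a _ b _ hab
    exact Sum.inl_injective ((psiEq n w h).injective hab)
  · intro t ht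
    simp only [Finset.mem_filter, Finset.mem_univ, true_and] at ht
    obtain ⟨s, hs⟩ := (psiEq n w h).surjective t
    cases s with
    | inl a => exact ⟨a, by simp only [Finset.mem_filter, Finset.mem_univ, true_and]; rw [hs]; exact ht.2, hs⟩
    | inr b =>
        exfalso
        have := psi_inr_val n w h b
        rw [hs] at this
        omega

private lemma card_inr (n w : ℕ) (h : w + (n - w) = n) (x : Fin n → ZMod 2) :
    (Finset.univ.filter (fun b : Fin (n - w) => x ((psiEq n w h) (Sum.inr b)) = 1)).card
      = (Finset.univ.filter (fun t : Fin n => w ≤ (t : ℕ) ∧ x t = 1)).card := by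
  apply Finset.card_bij (fun b _ => (psiEq n w h) (Sum.inr b))
  · intro b hb
    simp only [Finset.mem_filter, Finset.mem_univ, true_and] at hb ⊢
    exact ⟨by rw [psi_inr_val]; omega, hb⟩
  · intro a _ b _ hab
    exact Sum.inr_injective ((psiEq n w h).injective hab)
  · intro t ht
    simp only [Finset.mem_filter, Finset.mem_univ, true_and] at ht
    obtain ⟨s, hs⟩ := (psiEq n w h).surjective t
    cases s with
    | inr b => exact ⟨b, by simp only [Finset.mem_filter, Finset.mem_univ, true_and]; rw [hs]; exact ht.2, hs⟩
    | inl a =>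
        exfalso
        have := psi_inl_val n w h a
        rw [hs] at this
        have := a.2
        omega

end Helpers3

section Helpers4

open Finset

private lemma card_comp_perm {n : ℕ} (e : Equiv.Perm (Fin n)) (p : Fin n → Prop)
    [DecidablePred p] :
    (Finset.univ.filter (fun t => p (e t))).card = (Finset.univ.filter p).card := by
  apply Finset.card_bij (fun t _ => e t)
  · intro a ha; simpa using (Finset.mem_filter.mp ha).2
  · intro a _ b _ hab; exact e.injective hab
  · intro b hb
    exact ⟨e.symm b, by simpa using (Finset.mem_filter.mp hb).2, by simp⟩

private lemma perm_counts {n w i : ℕ} {u c : Fin n → ZMod 2} (e : Equiv.Perm (Fin n))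
    (he : ∀ t : Fin n, ((t : ℕ) < w ↔ c (e t) = 1)) (hu : wtOnes u = w) (hc : wtOnes c = w)
    (hdist : hammingDist u c = 2 * i) :
    (Finset.univ.filter (fun t : Fin n => (t : ℕ) < w ∧ ((u + c) ∘ e) t = 1)).card = i ∧
    (Finset.univ.filter (fun t : Fin n => w ≤ (t : ℕ) ∧ ((u + c) ∘ e) t = 1)).card = i := by
  classical
  have hadd : ∀ s : Fin n, ((u + c) s = 1) ↔ u s ≠ c s := by
    intro s
    exact zmod2_add_eq_one (u s) (c s)
  obtain ⟨k1, k2⟩ := counts_lemma hu hc hdist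
  constructor
  · rw [show (Finset.univ.filter (fun t : Fin n => (t : ℕ) < w ∧ ((u + c) ∘ e) t = 1))
        = Finset.univ.filter (fun t : Fin n => c (e t) = 1 ∧ u (e t) ≠ c (e t)) from by
      ext t
      simp only [Finset.mem_filter, Finset.mem_univ, true_and, Function.comp_apply]
      rw [he t, hadd (e t)]]
    rw [card_comp_perm e (fun s => c s = 1 ∧ u s ≠ c s)]
    exact k1
  · rw [show (Finset.univ.filter (fun t : Fin n => w ≤ (t : ℕ) ∧ ((u + c) ∘ e) t = 1))
        = Finset.univ.filter (fun t : Fin n => ¬ c (e t) = 1 ∧ u (e t) ≠ c (e t)) from by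
      ext t
      simp only [Finset.mem_filter, Finset.mem_univ, true_and, Function.comp_apply]
      rw [← he t, hadd (e t), not_lt]]
    rw [card_comp_perm e (fun s => ¬ c s = 1 ∧ u s ≠ c s)]
    exact k2

end Helpers4
/-- For a nonempty `(n,d,w)` constant-weight code `C` (`d` even,
`d < 2w ≤ n`) with distance distribution `{A_{2i}}`, a subset `H1 ⊆ H` with
`|H1| ≥ 2` and `m_{i,j} < d` for all `i ≠ j` in `H1`, and integers
`P_i ≥ T(i,w,i,n-w,d)` for `i ∈ H1`, one has `∑_{i ∈ H1} A_{2i}/P_i ≤ 1`. -/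
theorem distDistr_subset_bound (n d w : ℕ) (C : Finset (Fin n → ZMod 2)) (hC : C.Nonempty)
    (hcode : IsCWCode n d w C) (hd : Even d) (hdw : d < 2 * w) (hwn : 2 * w ≤ n)
    (H1 : Finset ℕ) (hH1 : H1 ⊆ Finset.Icc (d / 2) w) (hcard : 2 ≤ H1.card)
    (hm : ∀ i ∈ H1, ∀ j ∈ H1, i ≠ j → mMax n w i j < d)
    (P : ℕ → ℤ) (hP : ∀ i ∈ H1, (T i w i (n - w) d : ℤ) ≤ P i) :
    ∑ i ∈ H1, distDistr C (2 * i) / (P i : ℚ) ≤ 1 := by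
  classical
  have hw_le_n : w ≤ n := by omega
  have hwnw : w + (n - w) = n := by omega
  have hwle : w ≤ n - w := by omega
  have hPpos : ∀ i ∈ H1, (1 : ℤ) ≤ P i := by
    intro i hi
    have hiw := (Finset.mem_Icc.mp (hH1 hi)).2
    calc (1 : ℤ) ≤ (T i w i (n - w) d : ℤ) := by
          exact_mod_cast one_le_T hiw (le_trans hiw hwle)
      _ ≤ P i := hP i hi
  have key : ∀ c ∈ C, ∑ i ∈ H1, ((Sdist C c (2 * i)).card : ℚ) / (P i : ℚ) ≤ 1 := by
    intro c hcC
    obtain ⟨e, he⟩ := exists_perm c (hcode.1 c hcC) hw_le_n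
    set F : (Fin n → ZMod 2) → (Fin n → ZMod 2) := fun u => (u + c) ∘ e with hF
    have hFdist : ∀ u v, hammingDist (F u) (F v) = hammingDist u v := by
      intro u v
      rw [hF]
      rw [hd_comp_equiv e (u + c) (v + c), hd_add_right]
    have hFV : ∀ i : ℕ, ∀ u ∈ Sdist C c (2 * i), F u ∈ Vset n w i := by
      intro i u hu
      obtain ⟨huC, hud⟩ := Finset.mem_filter.mp hu
      obtain ⟨k1, k2⟩ := perm_counts e he (hcode.1 u huC) (hcode.1 c hcC) hud
      exact Finset.mem_filter.mpr ⟨Finset.mem_univ _, k1, k2⟩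
    have hdisj : ∀ i ∈ H1, ∀ j ∈ H1, i ≠ j →
        ∀ u ∈ Sdist C c (2 * i), ∀ v ∈ Sdist C c (2 * j), False := by
      intro i hi j hj hij u hu v hv
      obtain ⟨huC, hud⟩ := Finset.mem_filter.mp hu
      obtain ⟨hvC, hvd⟩ := Finset.mem_filter.mp hv
      have huv : u ≠ v := by
        intro h
        apply hij
        subst h
        omega
      have h1 : d ≤ hammingDist u v := hcode.2 u huC v hvC huv
      have h2 : hammingDist (F u) (F v) ≤ mMax n w i j := by
        show hammingDist (F u) (F v) ≤
          ((Vset n w i) ×ˢ (Vset n w j)).sup fun p => hammingDist p.1 p.2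
        exact Finset.le_sup (f := fun p : (Fin n → ZMod 2) × (Fin n → ZMod 2) =>
          hammingDist p.1 p.2) (Finset.mk_mem_product (hFV i u hu) (hFV j v hv))
      rw [hFdist] at h2
      have := hm i hi j hj hij
      omega
    have hsize : ∀ i ∈ H1, ((Sdist C c (2 * i)).card : ℤ) ≤ P i := by
      intro i hi
      set G : (Fin n → ZMod 2) → (Fin w ⊕ Fin (n - w) → ZMod 2) :=
        fun u => F u ∘ (psiEq n w hwnw) with hG
      have hGinj : Function.Injective G := by
        intro u v huv
        funext t
        obtain ⟨s, hs⟩ := (psiEq n w hwnw).surjective (e.symm t)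
        have h3 := congrFun huv s
        simp only [hG, hF, Function.comp_apply, hs] at h3
        rw [Equiv.apply_symm_apply] at h3
        have h4 : u t + c t = v t + c t := h3
        exact add_right_cancel h4
      set D := (Sdist C c (2 * i)).image G with hD
      have hcardD : D.card = (Sdist C c (2 * i)).card :=
        Finset.card_image_of_injective _ hGinj
      have hDCW : IsDCWCode i w i (n - w) d D := by
        constructor
        · intro x hx
          obtain ⟨u, hu, rfl⟩ := Finset.mem_image.mp hx
          have hv := hFV i u hu
          obtain ⟨-, k1, k2⟩ := Finset.mem_filter.mp hv
          constructor
          · have h5 := card_inl n w hwnw (F u)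
            simp only [hG, Function.comp_apply]
            rw [h5]
            exact k1
          · have h5 := card_inr n w hwnw (F u)
            simp only [hG, Function.comp_apply]
            rw [h5]
            exact k2
        · intro x hx y hy hxy
          obtain ⟨u, hu, rfl⟩ := Finset.mem_image.mp hx
          obtain ⟨v, hv, rfl⟩ := Finset.mem_image.mp hy
          have huv : u ≠ v := fun h => hxy (by rw [h])
          have hGdist : hammingDist (G u) (G v) = hammingDist u v := by
            simp only [hG]
            rw [hd_comp_equiv (psiEq n w hwnw) (F u) (F v), hFdist]
          rw [hGdist]
          exact hcode.2 u (Finset.mem_filter.mp hu).1 v (Finset.mem_filter.mp hv).1 huv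
      calc ((Sdist C c (2 * i)).card : ℤ) = (D.card : ℤ) := by rw [hcardD]
        _ ≤ (T i w i (n - w) d : ℤ) := by exact_mod_cast card_le_T D hDCW
        _ ≤ P i := hP i hi
    by_cases hall : ∀ j ∈ H1, Sdist C c (2 * j) = ∅
    · have : ∀ j ∈ H1, ((Sdist C c (2 * j)).card : ℚ) / (P j : ℚ) = 0 := by
        intro j hj
        rw [hall j hj]
        simp
      rw [Finset.sum_congr rfl this]
      simp
    · push_neg at hall
      obtain ⟨i₀, hi₀, hne⟩ := hall
      have hzero : ∀ j ∈ H1, j ≠ i₀ → ((Sdist C c (2 * j)).card : ℚ) / (P j : ℚ) = 0 := by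
        intro j hj hji
        have hemp : Sdist C c (2 * j) = ∅ := by
          by_contra hne2
          obtain ⟨v, hv⟩ := Finset.nonempty_iff_ne_empty.mpr hne2
          obtain ⟨u, hu⟩ := hne
          exact hdisj j hj i₀ hi₀ hji v hv u hu
        rw [hemp]
        simp
      rw [Finset.sum_eq_single_of_mem i₀ hi₀ hzero]
      have hp0 : (0 : ℚ) < ((P i₀ : ℤ) : ℚ) := by
        have := hPpos i₀ hi₀
        exact_mod_cast lt_of_lt_of_le one_pos this
      rw [div_le_one hp0]
      have := hsize i₀ hi₀
      exact_mod_cast this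
  have hCpos : (0 : ℚ) < (C.card : ℚ) := by exact_mod_cast hC.card_pos
  calc ∑ i ∈ H1, distDistr C (2 * i) / (P i : ℚ)
      = ∑ i ∈ H1, (∑ c ∈ C, ((Sdist C c (2 * i)).card : ℚ) / (P i : ℚ)) / (C.card : ℚ) := by
        refine Finset.sum_congr rfl fun i _ => ?_
        rw [distDistr, div_div, mul_comm ((C.card : ℚ)) ((P i : ℤ) : ℚ), ← div_div, Finset.sum_div]
    _ = (∑ c ∈ C, ∑ i ∈ H1, ((Sdist C c (2 * i)).card : ℚ) / (P i : ℚ)) / (C.card : ℚ) := by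
        rw [← Finset.sum_div, Finset.sum_comm]
    _ ≤ (∑ c ∈ C, (1 : ℚ)) / (C.card : ℚ) := by
        exact div_le_div_of_nonneg_right (Finset.sum_le_sum key) hCpos.le
    _ = 1 := by
        rw [Finset.sum_const, nsmul_eq_mul, mul_one, div_self (ne_of_gt hCpos)]
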